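/- Let R be a ring and C a class of right R-modules closed under direct summands (i.e., if M ∈ C and N is a direct summand of M then N ∈ C). If C is preenveloping (every module M admits a map f : M → C with C ∈ C such that every map from M to a module in C factors through f), then C is closed under arbitrary direct products. -/

import Mathlib

open CategoryTheory

universe u

/-- A class of modules is preenveloping if every module has a `C`-preenvelope. -/
def Preenveloping {R : Type u} [Ring R] (C : ModuleCat.{u} R → Prop) : Prop :=
  ∀ M : ModuleCat.{u} R, ∃ (E : ModuleCat.{u} R) (f : M ⟶ E), C E ∧
    ∀ (E' : ModuleCat.{u} R), C E' → ∀ g : M ⟶ E', ∃ h : E ⟶ E', f ≫ h = g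

/-- A class of modules is closed under direct summands. -/
def ClosedUnderSummands {R : Type u} [Ring R] (C : ModuleCat.{u} R → Prop) : Prop :=
  ∀ (M N : ModuleCat.{u} R), C M → ∀ (i : N ⟶ M) (r : M ⟶ N), i ≫ r = 𝟙 N → C N

theorem preenveloping_closed_under_products {R : Type u} [Ring R]
    (C : ModuleCat.{u} R → Prop) (hsum : ClosedUnderSummands C) (henv : Preenveloping C)
    (ι : Type u) (f : ι → ModuleCat.{u} R) (hf : ∀ i, C (f i)) :
    C (ModuleCat.of R (∀ i, f i)) := by
  set P := ModuleCat.of R (∀ i, f i)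
  obtain ⟨E, e, hE, hfac⟩ := henv P
  choose h hh using fun i => hfac (f i) (hf i)
  -- projections
  set π : ∀ i, P ⟶ f i := fun i => ModuleCat.ofHom (LinearMap.proj i : (∀ i, f i) →ₗ[R] f i)
  set r : E ⟶ P := ModuleCat.ofHom (LinearMap.pi (fun i => (h i (π i)).hom) : E →ₗ[R] ∀ i, f i)
  apply hsum E P hE e r
  ext x
  rename_i i
  have := congrArg (fun (g : P ⟶ f i) => g x) (hh i (π i))
  exact this
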